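/- Let $\mathfrak{g}$ be the 13-dimensional real Lie algebra with basis $(X_1,X_2,X_3,X_4,X_5,X_6,X_9,X_{12},T_1,T_2,E_1,E_2,E_3)$ and nonzero brackets $[X_1,X_2]=X_4$, $[X_1,X_3]=X_5$, $[X_2,X_3]=X_6$, $[X_1,X_6]=X_9$, $[X_3,X_4]=X_{12}$, $[X_2,X_5]=X_9+X_{12}$, $[T_1,X_1]=-X_1$, $[T_1,X_3]=X_3$, $[T_1,X_4]=-X_4$, $[T_1,X_6]=X_6$, $[T_2,X_1]=-X_1$, $[T_2,X_2]=2X_2$, $[T_2,X_3]=-X_3$, $[T_2,X_4]=X_4$, $[T_2,X_5]=-2X_5$, $[T_2,X_6]=X_6$, $[E_1,E_2]=E_3$, $[E_1,E_3]=-X_9-X_{12}$. Then the center of $\mathfrak{g}$ is the span of $X_9$ and $X_{12}$. -/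

import Mathlib

/-- Structure constants of the 13-dimensional Lie algebra of STATEMENT 12, with basis
indexed as `X₁,…,X₆ ↦ 0,…,5`, `X₉ ↦ 6`, `X₁₂ ↦ 7`, `T₁ ↦ 8`, `T₂ ↦ 9`, `E₁ ↦ 10`,
`E₂ ↦ 11`, `E₃ ↦ 12`. -/
def br13 {L : Type*} [LieRing L] [LieAlgebra ℝ L] (b : Fin 13 → L) (i j : Fin 13) : L :=
  match i.val, j.val with
  | 0, 1 => b 3        | 1, 0 => -b 3          -- [X₁,X₂] = X₄
  | 0, 2 => b 4        | 2, 0 => -b 4          -- [X₁,X₃] = X₅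
  | 1, 2 => b 5        | 2, 1 => -b 5          -- [X₂,X₃] = X₆
  | 0, 5 => b 6        | 5, 0 => -b 6          -- [X₁,X₆] = X₉
  | 2, 3 => b 7        | 3, 2 => -b 7          -- [X₃,X₄] = X₁₂
  | 1, 4 => b 6 + b 7  | 4, 1 => -(b 6 + b 7)  -- [X₂,X₅] = X₉ + X₁₂
  | 8, 0 => -b 0       | 0, 8 => b 0           -- [T₁,X₁] = -X₁
  | 8, 2 => b 2        | 2, 8 => -b 2          -- [T₁,X₃] = X₃
  | 8, 3 => -b 3       | 3, 8 => b 3           -- [T₁,X₄] = -X₄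
  | 8, 5 => b 5        | 5, 8 => -b 5          -- [T₁,X₆] = X₆
  | 9, 0 => -b 0       | 0, 9 => b 0           -- [T₂,X₁] = -X₁
  | 9, 1 => (2 : ℝ) • b 1 | 1, 9 => -((2 : ℝ) • b 1)  -- [T₂,X₂] = 2X₂
  | 9, 2 => -b 2       | 2, 9 => b 2           -- [T₂,X₃] = -X₃
  | 9, 3 => b 3        | 3, 9 => -b 3          -- [T₂,X₄] = X₄
  | 9, 4 => -((2 : ℝ) • b 4) | 4, 9 => (2 : ℝ) • b 4  -- [T₂,X₅] = -2X₅
  | 9, 5 => b 5        | 5, 9 => -b 5          -- [T₂,X₆] = X₆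
  | 10, 11 => b 12     | 11, 10 => -b 12       -- [E₁,E₂] = E₃
  | 10, 12 => -b 6 - b 7 | 12, 10 => b 6 + b 7 -- [E₁,E₃] = -X₉ - X₁₂
  | _, _ => 0

private lemma sum13 {M : Type*} [AddCommMonoid M] (f : Fin 13 → M) :
    ∑ i, f i = f 0 + f 1 + f 2 + f 3 + f 4 + f 5 + f 6 + f 7 + f 8 + f 9 + f 10 + f 11 + f 12 := by
  rw [Fin.sum_univ_castSucc, Fin.sum_univ_castSucc, Fin.sum_univ_castSucc,
    Fin.sum_univ_castSucc, Fin.sum_univ_castSucc, Fin.sum_univ_eight]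
  rfl

/-- the center of the 13-dimensional Lie algebra `𝔤` described above is the
span of `X₉` and `X₁₂`. -/
theorem statement12 {L : Type*} [LieRing L] [LieAlgebra ℝ L]
    (b : Module.Basis (Fin 13) ℝ L)
    (hbr : ∀ i j : Fin 13, ⁅b i, b j⁆ = br13 (⇑b) i j) :
    ∀ z : L, (∀ y : L, ⁅z, y⁆ = 0) ↔ z ∈ Submodule.span ℝ ({b 6, b 7} : Set L) := by
  intro z
  constructor
  · intro h
    have hz : z = ∑ i : Fin 13, b.repr z i • b i := (b.sum_repr z).symm
    have key : ∀ j : Fin 13, ∑ i : Fin 13, b.repr z i • br13 (⇑b) i j = 0 := by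
      intro j
      have h2 := h (b j)
      rw [hz] at h2
      rw [← h2]
      let f : L →ₗ[ℝ] L :=
        { toFun := fun x => ⁅x, b j⁆,
          map_add' := fun x y => add_lie x y _,
          map_smul' := fun t x => smul_lie t x _ }
      have hf : ⁅∑ i : Fin 13, (b.repr z) i • b i, b j⁆ = f (∑ i : Fin 13, (b.repr z) i • b i) := rfl
      rw [hf, map_sum]
      refine Finset.sum_congr rfl fun i _ => ?_
      rw [map_smul]
      show b.repr z i • br13 (⇑b) i j = b.repr z i • ⁅b i, b j⁆
      rw [hbr]
    have e8 := key 8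
    have e9 := key 9
    have e0 := key 0
    have e2 := key 2
    have e10 := key 10
    have e11 := key 11
    rw [sum13] at e8 e9 e0 e2 e10 e11
    simp only [show br13 (⇑b) 0 8 = b 0 from rfl, show br13 (⇑b) 1 8 = 0 from rfl, show br13 (⇑b) 2 8 = -b 2 from rfl, show br13 (⇑b) 3 8 = b 3 from rfl, show br13 (⇑b) 4 8 = 0 from rfl, show br13 (⇑b) 5 8 = -b 5 from rfl, show br13 (⇑b) 6 8 = 0 from rfl, show br13 (⇑b) 7 8 = 0 from rfl, show br13 (⇑b) 8 8 = 0 from rfl, show br13 (⇑b) 9 8 = 0 from rfl, show br13 (⇑b) 10 8 = 0 from rfl, show br13 (⇑b) 11 8 = 0 from rfl, show br13 (⇑b) 12 8 = 0 from rfl,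
      smul_zero, add_zero, zero_add] at e8
    simp only [show br13 (⇑b) 0 9 = b 0 from rfl, show br13 (⇑b) 1 9 = -((2:ℝ) • b 1) from rfl, show br13 (⇑b) 2 9 = b 2 from rfl, show br13 (⇑b) 3 9 = -b 3 from rfl, show br13 (⇑b) 4 9 = (2:ℝ) • b 4 from rfl, show br13 (⇑b) 5 9 = -b 5 from rfl, show br13 (⇑b) 6 9 = 0 from rfl, show br13 (⇑b) 7 9 = 0 from rfl, show br13 (⇑b) 8 9 = 0 from rfl, show br13 (⇑b) 9 9 = 0 from rfl, show br13 (⇑b) 10 9 = 0 from rfl, show br13 (⇑b) 11 9 = 0 from rfl, show br13 (⇑b) 12 9 = 0 from rfl,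
      smul_zero, add_zero, zero_add] at e9
    simp only [show br13 (⇑b) 0 0 = 0 from rfl, show br13 (⇑b) 1 0 = -b 3 from rfl, show br13 (⇑b) 2 0 = -b 4 from rfl, show br13 (⇑b) 3 0 = 0 from rfl, show br13 (⇑b) 4 0 = 0 from rfl, show br13 (⇑b) 5 0 = -b 6 from rfl, show br13 (⇑b) 6 0 = 0 from rfl, show br13 (⇑b) 7 0 = 0 from rfl, show br13 (⇑b) 8 0 = -b 0 from rfl, show br13 (⇑b) 9 0 = -b 0 from rfl, show br13 (⇑b) 10 0 = 0 from rfl, show br13 (⇑b) 11 0 = 0 from rfl, show br13 (⇑b) 12 0 = 0 from rfl,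
      smul_zero, add_zero, zero_add] at e0
    simp only [show br13 (⇑b) 0 2 = b 4 from rfl, show br13 (⇑b) 1 2 = b 5 from rfl, show br13 (⇑b) 2 2 = 0 from rfl, show br13 (⇑b) 3 2 = -b 7 from rfl, show br13 (⇑b) 4 2 = 0 from rfl, show br13 (⇑b) 5 2 = 0 from rfl, show br13 (⇑b) 6 2 = 0 from rfl, show br13 (⇑b) 7 2 = 0 from rfl, show br13 (⇑b) 8 2 = b 2 from rfl, show br13 (⇑b) 9 2 = -b 2 from rfl, show br13 (⇑b) 10 2 = 0 from rfl, show br13 (⇑b) 11 2 = 0 from rfl, show br13 (⇑b) 12 2 = 0 from rfl,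
      smul_zero, add_zero, zero_add] at e2
    simp only [show br13 (⇑b) 0 10 = 0 from rfl, show br13 (⇑b) 1 10 = 0 from rfl, show br13 (⇑b) 2 10 = 0 from rfl, show br13 (⇑b) 3 10 = 0 from rfl, show br13 (⇑b) 4 10 = 0 from rfl, show br13 (⇑b) 5 10 = 0 from rfl, show br13 (⇑b) 6 10 = 0 from rfl, show br13 (⇑b) 7 10 = 0 from rfl, show br13 (⇑b) 8 10 = 0 from rfl, show br13 (⇑b) 9 10 = 0 from rfl, show br13 (⇑b) 10 10 = 0 from rfl, show br13 (⇑b) 11 10 = -b 12 from rfl, show br13 (⇑b) 12 10 = b 6 + b 7 from rfl,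
      smul_zero, add_zero, zero_add] at e10
    simp only [show br13 (⇑b) 0 11 = 0 from rfl, show br13 (⇑b) 1 11 = 0 from rfl, show br13 (⇑b) 2 11 = 0 from rfl, show br13 (⇑b) 3 11 = 0 from rfl, show br13 (⇑b) 4 11 = 0 from rfl, show br13 (⇑b) 5 11 = 0 from rfl, show br13 (⇑b) 6 11 = 0 from rfl, show br13 (⇑b) 7 11 = 0 from rfl, show br13 (⇑b) 8 11 = 0 from rfl, show br13 (⇑b) 9 11 = 0 from rfl, show br13 (⇑b) 10 11 = b 12 from rfl, show br13 (⇑b) 11 11 = 0 from rfl, show br13 (⇑b) 12 11 = 0 from rfl,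
      smul_zero, add_zero, zero_add] at e11
    have h0 : b.repr z 0 = 0 := by
      have := congrArg (fun v => b.repr v (0 : Fin 13)) e8
      simpa [Finsupp.single_apply] using this
    have h2 : b.repr z 2 = 0 := by
      have := congrArg (fun v => b.repr v (2 : Fin 13)) e8
      simpa [Finsupp.single_apply] using this
    have h3 : b.repr z 3 = 0 := by
      have := congrArg (fun v => b.repr v (3 : Fin 13)) e8
      simpa [Finsupp.single_apply] using this
    have h5 : b.repr z 5 = 0 := by
      have := congrArg (fun v => b.repr v (5 : Fin 13)) e8
      simpa [Finsupp.single_apply] using this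
    have h1 : b.repr z 1 = 0 := by
      have := congrArg (fun v => b.repr v (1 : Fin 13)) e9
      simp [Finsupp.single_apply] at this
      linarith
    have h4 : b.repr z 4 = 0 := by
      have := congrArg (fun v => b.repr v (4 : Fin 13)) e9
      simp [Finsupp.single_apply] at this
      linarith
    have h89 : b.repr z 8 + b.repr z 9 = 0 := by
      have := congrArg (fun v => b.repr v (0 : Fin 13)) e0
      simp [Finsupp.single_apply] at this
      linarith
    have h89' : b.repr z 8 - b.repr z 9 = 0 := by
      have := congrArg (fun v => b.repr v (2 : Fin 13)) e2
      simp [Finsupp.single_apply] at this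
      linarith
    have h8 : b.repr z 8 = 0 := by linarith
    have h9 : b.repr z 9 = 0 := by linarith
    have h10 : b.repr z 10 = 0 := by
      have := congrArg (fun v => b.repr v (12 : Fin 13)) e11
      simpa [Finsupp.single_apply] using this
    have h11 : b.repr z 11 = 0 := by
      have := congrArg (fun v => b.repr v (12 : Fin 13)) e10
      simp [Finsupp.single_apply] at this
      linarith
    have h12 : b.repr z 12 = 0 := by
      have := congrArg (fun v => b.repr v (6 : Fin 13)) e10
      simp [Finsupp.single_apply, h11] at this
      linarith
    have hz' : z = b.repr z 6 • b 6 + b.repr z 7 • b 7 := by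
      conv_lhs => rw [hz]
      rw [sum13]
      rw [h0, h1, h2, h3, h4, h5, h8, h9, h10, h11, h12]
      simp
    rw [hz']
    exact Submodule.add_mem _
      (Submodule.smul_mem _ _ (Submodule.subset_span (by simp)))
      (Submodule.smul_mem _ _ (Submodule.subset_span (by simp)))
  · intro hz y
    have hcen : ∀ i : Fin 13, i = 6 ∨ i = 7 → ∀ w : L, ⁅b i, w⁆ = 0 := by
      intro i hi w
      have had : LieAlgebra.ad ℝ L (b i) = 0 := by
        apply b.ext
        intro j
        rcases hi with rfl | rfl <;>
          · rw [LieAlgebra.ad_apply, hbr]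
            fin_cases j <;> rfl
      have := congrArg (fun f => f w) had
      simpa [LieAlgebra.ad_apply] using this
    obtain ⟨a, d, rfl⟩ := Submodule.mem_span_pair.mp hz
    rw [add_lie, smul_lie, smul_lie, hcen 6 (Or.inl rfl) y, hcen 7 (Or.inr rfl) y]
    simp
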